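/- A strongly connected digraph G is a directed cactus (every edge lies in exactly one directed cycle) if and only if any two directed cycles of G share at most one common vertex. -/

import Mathlib

open Matrix Finset

/-- Out-degree of vertex `i` in the digraph with adjacency `A`. -/
def outdeg {n : ℕ} (A : Fin n → Fin n → Bool) (i : Fin n) : ℕ :=
  (Finset.univ.filter (fun j => A i j = true)).card

/-- In-degree of vertex `i`. -/
def indeg {n : ℕ} (A : Fin n → Fin n → Bool) (i : Fin n) : ℕ :=
  (Finset.univ.filter (fun j => A j i = true)).card

/-- Laplacian matrix of a digraph: diagonal = out-degree, `-1` on edges, `0` otherwise. -/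
def lap {n : ℕ} (A : Fin n → Fin n → Bool) : Matrix (Fin n) (Fin n) ℝ :=
  Matrix.of fun i j => if i = j then (outdeg A i : ℝ) else if A i j then -1 else 0

/-- Reachability by directed edges. -/
def Reach {n : ℕ} (A : Fin n → Fin n → Bool) : Fin n → Fin n → Prop :=
  Relation.ReflTransGen (fun a b => A a b = true)

def StronglyConnected {n : ℕ} (A : Fin n → Fin n → Bool) : Prop := ∀ i j, Reach A i j

def IsBalanced {n : ℕ} (A : Fin n → Fin n → Bool) : Prop := ∀ i, indeg A i = outdeg A i

/-- In-degree of `v` in an edge set `T`. -/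
def tIndeg {n : ℕ} (T : Finset (Fin n × Fin n)) (v : Fin n) : ℕ :=
  (T.filter (fun e => e.2 = v)).card

/-- Reachability using only the edges of `T`. -/
def ReachIn {n : ℕ} (T : Finset (Fin n × Fin n)) : Fin n → Fin n → Prop :=
  Relation.ReflTransGen (fun a b => (a, b) ∈ T)

/-- Spanning tree of the digraph rooted at `i` (spanning arborescence, edges directed
away from `i`): every vertex other than `i` has in-degree 1, `i` has in-degree 0, and
every vertex is reachable from `i` (i.e. the subgraph is connected and acyclic). -/
def IsSpanningTree {n : ℕ} (A : Fin n → Fin n → Bool) (i : Fin n)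
    (T : Finset (Fin n × Fin n)) : Prop :=
  (∀ e ∈ T, A e.1 e.2 = true) ∧ tIndeg T i = 0 ∧
    (∀ v, v ≠ i → tIndeg T v = 1) ∧ (∀ v, ReachIn T i v)

/-- Spanning forest with exactly two trees, rooted at `i` and `j`: two vertex-disjoint
arborescences partitioning the vertex set, with roots `i` and `j`. -/
def IsTwoForest {n : ℕ} (A : Fin n → Fin n → Bool) (i j : Fin n)
    (T : Finset (Fin n × Fin n)) : Prop :=
  (∀ e ∈ T, A e.1 e.2 = true) ∧ tIndeg T i = 0 ∧ tIndeg T j = 0 ∧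
    (∀ v, v ≠ i → v ≠ j → tIndeg T v = 1) ∧ (∀ v, ReachIn T i v ∨ ReachIn T j v)

/-- `det L[{i}ᶜ, {i}ᶜ]`: determinant of the principal submatrix deleting row/column `i`. -/
def minor1 {n : ℕ} (L : Matrix (Fin n) (Fin n) ℝ) (i : Fin n) : ℝ :=
  (L.submatrix (fun a : {x : Fin n // x ≠ i} => (a : Fin n))
    (fun a : {x : Fin n // x ≠ i} => (a : Fin n))).det

/-- `det L[{i,j}ᶜ, {i,j}ᶜ]`: determinant of the principal submatrix deleting rows and
columns `i` and `j`. -/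
def minor2 {n : ℕ} (L : Matrix (Fin n) (Fin n) ℝ) (i j : Fin n) : ℝ :=
  (L.submatrix (fun a : {x : Fin n // x ≠ i ∧ x ≠ j} => (a : Fin n))
    (fun a : {x : Fin n // x ≠ i ∧ x ≠ j} => (a : Fin n))).det

/-- `M` is the Moore–Penrose inverse of `L` (the four Penrose equations). -/
def IsMoorePenrose {n : ℕ} (L M : Matrix (Fin n) (Fin n) ℝ) : Prop :=
  L * M * L = L ∧ M * L * M = M ∧ (L * M)ᵀ = L * M ∧ (M * L)ᵀ = M * L

/-- Resistance `r_{ij} = l†_{ii} + l†_{jj} - 2 l†_{ij}` computed from `M = L†`. -/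
def resist {n : ℕ} (M : Matrix (Fin n) (Fin n) ℝ) (i j : Fin n) : ℝ :=
  M i i + M j j - 2 * M i j

/-- Directed path from `i` to `j`: a list of distinct vertices starting at `i`, ending at
`j`, consecutive ones joined by directed edges. -/
def IsPath {n : ℕ} (A : Fin n → Fin n → Bool) (i j : Fin n) (p : List (Fin n)) : Prop :=
  p.Chain' (fun a b => A a b = true) ∧ p.head? = some i ∧ p.getLast? = some j ∧ p.Nodup

/-- `s` is the edge set of a directed cycle of the digraph: the cyclically consecutive
pairs of a nonempty duplicate-free vertex list, all being directed edges. -/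
def IsCycle {n : ℕ} (A : Fin n → Fin n → Bool) (s : Finset (Fin n × Fin n)) : Prop :=
  ∃ c : List (Fin n), 2 ≤ c.length ∧ c.Nodup ∧
    (∀ p ∈ c.zip (c.rotate 1), A p.1 p.2 = true) ∧ s = (c.zip (c.rotate 1)).toFinset

/-- Vertex set of a cycle given by its edge set. -/
def cycVerts {n : ℕ} (s : Finset (Fin n × Fin n)) : Finset (Fin n) := s.image Prod.fst

/-- Directed cactus: strongly connected and every directed edge lies in exactly one
directed cycle. -/
def IsCactus {n : ℕ} (A : Fin n → Fin n → Bool) : Prop :=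
  StronglyConnected A ∧
    ∀ i j : Fin n, A i j = true → ∃! s : Finset (Fin n × Fin n), IsCycle A s ∧ (i, j) ∈ s

/-- Classical distance: length (number of edges) of a shortest directed path. -/
noncomputable def pdist {n : ℕ} (A : Fin n → Fin n → Bool) (i j : Fin n) : ℕ :=
  sInf {m : ℕ | ∃ p : List (Fin n), IsPath A i j p ∧ p.length = m + 1}

namespace Stmt8Aux

/-- Edge list of the path `a :: l`. -/
def pe {α : Type*} (a : α) : List α → List (α × α)
  | [] => []
  | b :: t => (a, b) :: pe b t

@[simp] lemma pe_nil {α : Type*} (a : α) : pe a [] = [] := rfl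
@[simp] lemma pe_cons {α : Type*} (a b : α) (t : List α) :
    pe a (b :: t) = (a, b) :: pe b t := rfl

lemma pe_append {α : Type*} (a b : α) (l₁ l₂ : List α) :
    pe a (l₁ ++ b :: l₂) = pe a (l₁ ++ [b]) ++ pe b l₂ := by
  induction l₁ generalizing a with
  | nil => simp
  | cons c t ih => simp [ih]

@[simp] lemma map_snd_pe {α : Type*} (a : α) (l : List α) :
    (pe a l).map Prod.snd = l := by
  induction l generalizing a with
  | nil => rfl
  | cons b t ih => simp [ih]

@[simp] lemma map_fst_pe {α : Type*} (a : α) (l : List α) :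
    (pe a l).map Prod.fst = (a :: l).dropLast := by
  induction l generalizing a with
  | nil => rfl
  | cons b t ih => simp [ih]

lemma pe_head_mem {α : Type*} (a : α) (l : List α) (h : l ≠ []) :
    (a, l.head h) ∈ pe a l := by
  cases l with
  | nil => exact absurd rfl h
  | cons b t => simp

lemma zip_concat {α : Type*} : ∀ (l : List α) (a x : α),
    (a :: l).zip (l ++ [x]) = pe a (l ++ [x])
  | [], a, x => rfl
  | b :: t, a, x => by simpa using zip_concat t b x

lemma edges_eq {α : Type*} (a : α) (t : List α) :
    (a :: t).zip ((a :: t).rotate 1) = pe a (t ++ [a]) := by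
  rw [show (1:ℕ) = 0 + 1 from rfl, List.rotate_cons_succ, List.rotate_zero]
  exact zip_concat t a a

lemma isCycle_iff {n : ℕ} (A : Fin n → Fin n → Bool) (s : Finset (Fin n × Fin n)) :
    IsCycle A s ↔ ∃ (x : Fin n) (t : List (Fin n)), (x :: t).Nodup ∧ t ≠ [] ∧
      (∀ e ∈ pe x (t ++ [x]), A e.1 e.2 = true) ∧ s = (pe x (t ++ [x])).toFinset := by
  constructor
  · rintro ⟨c, hlen, hnd, hedge, hs⟩
    cases c with
    | nil => simp at hlen
    | cons x t =>
      refine ⟨x, t, hnd, ?_, ?_, ?_⟩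
      · rintro rfl; simp at hlen
      · rw [← edges_eq]; exact hedge
      · rw [← edges_eq]; exact hs
  · rintro ⟨x, t, hnd, hne, hedge, hs⟩
    refine ⟨x :: t, ?_, hnd, by rw [edges_eq]; exact hedge, by rw [edges_eq]; exact hs⟩
    cases t with
    | nil => exact absurd rfl hne
    | cons b u => simp

lemma cycVerts_rep {n : ℕ} (x : Fin n) (t : List (Fin n)) :
    cycVerts ((pe x (t ++ [x])).toFinset) = (x :: t).toFinset := by
  have hdl : (x :: (t ++ [x])).dropLast = x :: t := by
    rw [show x :: (t ++ [x]) = (x :: t) ++ [x] by simp, List.dropLast_concat]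
  ext a
  simp only [cycVerts, Finset.mem_image, List.mem_toFinset]
  constructor
  · rintro ⟨e, he, rfl⟩
    have : e.1 ∈ (pe x (t ++ [x])).map Prod.fst := List.mem_map_of_mem he
    rw [map_fst_pe, hdl] at this
    exact this
  · intro ha
    have : a ∈ (pe x (t ++ [x])).map Prod.fst := by rw [map_fst_pe, hdl]; exact ha
    obtain ⟨e, he, hea⟩ := List.mem_map.mp this
    exact ⟨e, he, hea⟩

lemma edge_facts {n : ℕ} {A : Fin n → Fin n → Bool} {s : Finset (Fin n × Fin n)}
    (h : IsCycle A s) {a b : Fin n} (hab : (a, b) ∈ s) :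
    A a b = true ∧ a ∈ cycVerts s ∧ b ∈ cycVerts s := by
  obtain ⟨x, t, hnd, hne, hedge, rfl⟩ := (isCycle_iff A s).mp h
  rw [List.mem_toFinset] at hab
  refine ⟨hedge _ hab, ?_, ?_⟩
  · exact Finset.mem_image_of_mem _ (List.mem_toFinset.mpr hab)
  · rw [cycVerts_rep, List.mem_toFinset]
    have : b ∈ (pe x (t ++ [x])).map Prod.snd := List.mem_map_of_mem hab
    rw [map_snd_pe] at this
    rcases List.mem_append.mp this with h' | h'
    · exact List.mem_cons_of_mem _ h'
    · simp at h'; simp [h']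

lemma rotate_rep {α : Type*} {x v : α} {t : List α} (hv : v ∈ x :: t) :
    ∃ t' : List α, (v :: t').Perm (x :: t) ∧
      (pe v (t' ++ [v])).Perm (pe x (t ++ [x])) := by
  rcases List.mem_cons.mp hv with rfl | hv
  · exact ⟨t, .refl _, .refl _⟩
  · obtain ⟨m, l₂, rfl⟩ := List.append_of_mem hv
    refine ⟨l₂ ++ x :: m, ?_, ?_⟩
    · have h1 : v :: (l₂ ++ x :: m) = (v :: l₂) ++ (x :: m) := by simp
      have h2 : x :: (m ++ v :: l₂) = (x :: m) ++ (v :: l₂) := by simp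
      rw [h1, h2]; exact List.perm_append_comm
    · have h1 : pe x ((m ++ v :: l₂) ++ [x]) = pe x (m ++ [v]) ++ pe v (l₂ ++ [x]) := by
        rw [show (m ++ v :: l₂) ++ [x] = m ++ v :: (l₂ ++ [x]) by simp, pe_append]
      have h2 : pe v ((l₂ ++ x :: m) ++ [v]) = pe v (l₂ ++ [x]) ++ pe x (m ++ [v]) := by
        rw [show (l₂ ++ x :: m) ++ [v] = l₂ ++ x :: (m ++ [v]) by simp, pe_append]
      rw [h1, h2]; exact List.perm_append_comm

lemma rep_starting_at {n : ℕ} {A : Fin n → Fin n → Bool} {s : Finset (Fin n × Fin n)}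
    (h : IsCycle A s) {v : Fin n} (hv : v ∈ cycVerts s) :
    ∃ t : List (Fin n), (v :: t).Nodup ∧ t ≠ [] ∧
      (∀ e ∈ pe v (t ++ [v]), A e.1 e.2 = true) ∧ s = (pe v (t ++ [v])).toFinset := by
  obtain ⟨x, t, hnd, hne, hedge, rfl⟩ := (isCycle_iff A s).mp h
  rw [cycVerts_rep, List.mem_toFinset] at hv
  obtain ⟨t', hperm, heperm⟩ := rotate_rep hv
  refine ⟨t', hperm.symm.nodup hnd, ?_, fun e he => hedge e (heperm.mem_iff.mp he), ?_⟩
  · intro h0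
    have := hperm.length_eq
    subst h0
    cases t with
    | nil => exact hne rfl
    | cons b u => simp at this
  · exact List.toFinset_eq_of_perm _ _ heperm.symm


lemma reach_path {n : ℕ} {A : Fin n → Fin n → Bool} {b : Fin n} {a : Fin n}
    (h : Reach A a b) :
    a = b ∨ ∃ l : List (Fin n), (a :: (l ++ [b])).Nodup ∧
      ∀ e ∈ pe a (l ++ [b]), A e.1 e.2 = true := by
  induction h using Relation.ReflTransGen.head_induction_on with
  | refl => exact Or.inl rfl
  | @head a c hac hcb ih =>
    rcases ih with rfl | ⟨l, hnd, hedge⟩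
    · by_cases hab : a = c
      · exact Or.inl hab
      · refine Or.inr ⟨[], ?_, ?_⟩
        · simp [hab]
        · intro e he; simp at he; subst he; exact hac
    · by_cases hmem : a ∈ c :: (l ++ [b])
      · rcases List.mem_cons.mp hmem with rfl | hmem'
        · exact Or.inr ⟨l, hnd, hedge⟩
        rcases List.mem_append.mp hmem' with hal | hab
        · obtain ⟨m₁, m₂, rfl⟩ := List.append_of_mem hal
          refine Or.inr ⟨m₂, ?_, ?_⟩
          · have hsub : List.Sublist (a :: (m₂ ++ [b])) (c :: ((m₁ ++ a :: m₂) ++ [b])) := by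
              have heq : c :: ((m₁ ++ a :: m₂) ++ [b]) = (c :: m₁) ++ (a :: (m₂ ++ [b])) := by
                simp
              rw [heq]
              exact List.sublist_append_right _ _
            exact hnd.sublist hsub
          · have hsplit : pe c ((m₁ ++ a :: m₂) ++ [b])
                = pe c (m₁ ++ [a]) ++ pe a (m₂ ++ [b]) := by
              rw [show (m₁ ++ a :: m₂) ++ [b] = m₁ ++ a :: (m₂ ++ [b]) by simp, pe_append]
            intro e he
            apply hedge e
            rw [show (m₁ ++ a :: m₂) ++ [b] = m₁ ++ a :: (m₂ ++ [b]) by simp] at hsplit ⊢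
            rw [hsplit]
            exact List.mem_append_right _ he
        · simp only [List.mem_singleton] at hab
          exact Or.inl hab
      · refine Or.inr ⟨c :: l, ?_, ?_⟩
        · simp only [List.cons_append, List.nodup_cons] at hnd ⊢
          refine ⟨?_, hnd⟩
          simpa using hmem
        · intro e he
          simp only [List.cons_append, pe_cons] at he
          rcases List.mem_cons.mp he with rfl | he'
          · exact hac
          · exact hedge e he'

lemma exists_cycle {n : ℕ} {A : Fin n → Fin n → Bool} (hA : ∀ i, A i i = false)
    (hsc : StronglyConnected A) {i j : Fin n} (hij : A i j = true) :
    ∃ s : Finset (Fin n × Fin n), IsCycle A s ∧ (i, j) ∈ s := by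
  have hne : j ≠ i := by rintro rfl; rw [hA] at hij; simp at hij
  rcases reach_path (hsc j i) with h | ⟨l, hnd, hedge⟩
  · exact absurd h hne
  have hpe : pe i ((j :: l) ++ [i]) = (i, j) :: pe j (l ++ [i]) := by
    simp only [List.cons_append, pe_cons]
  refine ⟨(pe i ((j :: l) ++ [i])).toFinset,
    (isCycle_iff A _).mpr ⟨i, j :: l, ?_, by simp, ?_, rfl⟩, ?_⟩
  · simp only [List.nodup_cons]
    have h1 : i ∉ j :: l := by
      intro hmem
      have : ¬ (j :: (l ++ [i])).Nodup := by
        rcases List.mem_cons.mp hmem with rfl | hil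
        · intro hh; simp at hh
        · intro hh
          obtain ⟨m₁, m₂, rfl⟩ := List.append_of_mem hil
          simp [List.nodup_append] at hh
      exact this hnd
    have h2 : (j :: l).Nodup :=
      hnd.sublist (by simp : List.Sublist (j :: l) (j :: (l ++ [i])))
    exact ⟨h1, List.nodup_cons.mp h2⟩
  · intro e he
    rw [hpe] at he
    rcases List.mem_cons.mp he with rfl | he'
    · exact hij
    · exact hedge e he'
  · rw [List.mem_toFinset, hpe]
    exact List.mem_cons_self


lemma unique_of_share {n : ℕ} {A : Fin n → Fin n → Bool} (hA : ∀ i, A i i = false)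
    (hsh : ∀ s₁ s₂ : Finset (Fin n × Fin n), IsCycle A s₁ → IsCycle A s₂ → s₁ ≠ s₂ →
        (cycVerts s₁ ∩ cycVerts s₂).card ≤ 1)
    {i j : Fin n} {s s' : Finset (Fin n × Fin n)}
    (h : IsCycle A s ∧ (i, j) ∈ s) (h' : IsCycle A s' ∧ (i, j) ∈ s') : s = s' := by
  by_contra hne
  have hij : i ≠ j := by
    rintro rfl
    have := (edge_facts h.1 h.2).1
    rw [hA] at this; simp at this
  have hi : i ∈ cycVerts s ∩ cycVerts s' :=
    Finset.mem_inter.mpr ⟨(edge_facts h.1 h.2).2.1, (edge_facts h'.1 h'.2).2.1⟩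
  have hj : j ∈ cycVerts s ∩ cycVerts s' :=
    Finset.mem_inter.mpr ⟨(edge_facts h.1 h.2).2.2, (edge_facts h'.1 h'.2).2.2⟩
  have h2 : 1 < (cycVerts s ∩ cycVerts s').card :=
    Finset.one_lt_card.mpr ⟨i, hi, j, hj, hij⟩
  exact absurd (hsh s s' h.1 h'.1 hne) (by omega)


/-- The auxiliary minimization predicate: `s₁` can be written as a cycle starting at a
vertex `x` of `cycVerts s₂`, reaching another vertex `y` of `cycVerts s₂` after exactly
`k` intermediate vertices. -/
def Q {n : ℕ} (A : Fin n → Fin n → Bool) (s₁ s₂ : Finset (Fin n × Fin n)) (k : ℕ) : Prop :=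
  ∃ (x y : Fin n) (p q : List (Fin n)),
    p.length = k ∧ (x :: (p ++ y :: q)).Nodup ∧
    (∀ e ∈ pe x ((p ++ y :: q) ++ [x]), A e.1 e.2 = true) ∧
    s₁ = (pe x ((p ++ y :: q) ++ [x])).toFinset ∧
    x ∈ cycVerts s₂ ∧ y ∈ cycVerts s₂

lemma forward {n : ℕ} {A : Fin n → Fin n → Bool} (hA : ∀ i, A i i = false)
    (h : ∀ i j : Fin n, A i j = true →
      ∃! s : Finset (Fin n × Fin n), IsCycle A s ∧ (i, j) ∈ s)
    {s₁ s₂ : Finset (Fin n × Fin n)} (hc1 : IsCycle A s₁) (hc2 : IsCycle A s₂)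
    (hne : s₁ ≠ s₂) : (cycVerts s₁ ∩ cycVerts s₂).card ≤ 1 := by
  by_contra hcard
  push_neg at hcard
  obtain ⟨u, hu, v, hv, huv⟩ := Finset.one_lt_card.mp hcard
  simp only [Finset.mem_inter] at hu hv
  -- Step 1: the two cycles share no edge
  have hdisj : ∀ e : Fin n × Fin n, e ∈ s₁ → e ∉ s₂ := by
    intro e he1 he2
    have hAe : A e.1 e.2 = true := (edge_facts hc1 (show (e.1, e.2) ∈ s₁ by simpa)).1
    exact hne ((h e.1 e.2 hAe).unique ⟨hc1, by simpa⟩ ⟨hc2, by simpa⟩)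
  classical
  have hQex : ∃ k, Q A s₁ s₂ k := by
    obtain ⟨t, hnd, htne, hedge, hs⟩ := rep_starting_at hc1 hu.1
    have hvt : v ∈ t := by
      have hvm : v ∈ cycVerts s₁ := hv.1
      rw [hs, cycVerts_rep, List.mem_toFinset] at hvm
      rcases List.mem_cons.mp hvm with rfl | hvt
      · exact (huv rfl).elim
      · exact hvt
    obtain ⟨p, q, rfl⟩ := List.append_of_mem hvt
    exact ⟨p.length, u, v, p, q, rfl, hnd, hedge, hs, hu.2, hv.2⟩
  obtain ⟨x, y, p, q, hk, hnd, hedge, hs, hx2, hy2⟩ := Nat.find_spec hQex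
  -- minimality: interior of the arc avoids cycVerts s₂
  have hpV : ∀ w ∈ p, w ∉ cycVerts s₂ := by
    intro w hw hwV
    obtain ⟨p₁, p₂, rfl⟩ := List.append_of_mem hw
    have hlt : p₁.length < Nat.find hQex := by
      rw [← hk, List.length_append, List.length_cons]; omega
    apply Nat.find_min hQex hlt
    have heq : ((p₁ ++ w :: p₂) ++ y :: q : List (Fin n))
        = (p₁ ++ w :: (p₂ ++ y :: q)) := by simp
    rw [heq] at hnd hedge hs
    exact ⟨x, w, p₁, p₂ ++ y :: q, rfl, hnd, hedge, hs, hx2, hwV⟩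
  -- rotate the second cycle to start at y
  obtain ⟨t₂, hnd₂, ht₂ne, hedge₂, hs₂⟩ := rep_starting_at hc2 hy2
  have hxy : x ≠ y := by
    rintro rfl
    exact (List.nodup_cons.mp hnd).1 (by simp)
  have hxt₂ : x ∈ t₂ := by
    have hxm : x ∈ cycVerts s₂ := hx2
    rw [hs₂, cycVerts_rep, List.mem_toFinset] at hxm
    rcases List.mem_cons.mp hxm with h' | h'
    · exact absurd h' hxy
    · exact h'
  obtain ⟨p', q', rfl⟩ := List.append_of_mem hxt₂
  -- edge list decompositions
  have h1 : pe x ((p ++ y :: q) ++ [x]) = pe x (p ++ [y]) ++ pe y (q ++ [x]) := by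
    rw [show (p ++ y :: q) ++ [x] = p ++ y :: (q ++ [x]) by simp, pe_append]
  have h2 : pe y ((p' ++ x :: q') ++ [y]) = pe y (p' ++ [x]) ++ pe x (q' ++ [y]) := by
    rw [show (p' ++ x :: q') ++ [y] = p' ++ x :: (q' ++ [y]) by simp, pe_append]
  have h3 : pe x ((p ++ y :: p') ++ [x]) = pe x (p ++ [y]) ++ pe y (p' ++ [x]) := by
    rw [show (p ++ y :: p') ++ [x] = p ++ y :: (p' ++ [x]) by simp, pe_append]
  -- the new cycle is simple
  have hp'V : ∀ w ∈ p', w ∈ cycVerts s₂ := by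
    intro w hw
    rw [hs₂, cycVerts_rep, List.mem_toFinset]
    simp [hw]
  have e1 := List.nodup_cons.mp hnd
  have e2 := List.nodup_cons.mp hnd₂
  have hmid1 := (List.nodup_middle.mp e1.2)
  have hmid2 := (List.nodup_middle.mp e2.2)
  have hynp : y ∉ p := fun hh => (List.nodup_cons.mp hmid1).1 (by simp [hh])
  have hpnd : p.Nodup := ((List.nodup_cons.mp hmid1).2.sublist (List.sublist_append_left _ _))
  have hxnp' : x ∉ p' := fun hh => (List.nodup_cons.mp hmid2).1 (by simp [hh])
  have hp'nd : p'.Nodup := ((List.nodup_cons.mp hmid2).2.sublist (List.sublist_append_left _ _))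
  have hynp' : y ∉ p' := fun hh => e2.1 (by simp [hh])
  have hxnp : x ∉ p := fun hh => e1.1 (by simp [hh])
  have hdpp' : p.Disjoint p' := fun {a} ha ha' => hpV a ha (hp'V a ha')
  have hnd₃ : (x :: (p ++ y :: p')).Nodup := by
    rw [List.nodup_cons, List.nodup_middle, List.nodup_cons]
    refine ⟨?_, ?_, hpnd.append hp'nd hdpp'⟩
    · simp only [List.mem_append, List.mem_cons, not_or]
      exact ⟨hxnp, hxy, hxnp'⟩
    · simp only [List.mem_append, not_or]
      exact ⟨hynp, hynp'⟩
  -- the new cycle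
  have hedge₃ : ∀ e ∈ pe x ((p ++ y :: p') ++ [x]), A e.1 e.2 = true := by
    intro e he
    rw [h3] at he
    rcases List.mem_append.mp he with h' | h'
    · exact hedge e (by rw [h1]; exact List.mem_append_left _ h')
    · exact hedge₂ e (by rw [h2]; exact List.mem_append_left _ h')
  set s₃ : Finset (Fin n × Fin n) := (pe x ((p ++ y :: p') ++ [x])).toFinset with hs₃def
  have hc3 : IsCycle A s₃ :=
    (isCycle_iff A s₃).mpr ⟨x, p ++ y :: p', hnd₃, by simp, hedge₃, rfl⟩
  -- the distinguished edges
  have hpy : (p ++ [y] : List (Fin n)) ≠ [] := by simp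
  have he₀1 : (x, (p ++ [y]).head hpy) ∈ s₁ := by
    rw [hs, List.mem_toFinset, h1]
    exact List.mem_append_left _ (pe_head_mem x _ hpy)
  have he₀3 : (x, (p ++ [y]).head hpy) ∈ s₃ := by
    rw [hs₃def, List.mem_toFinset, h3]
    exact List.mem_append_left _ (pe_head_mem x _ hpy)
  have hpx' : (p' ++ [x] : List (Fin n)) ≠ [] := by simp
  have he₂2 : (y, (p' ++ [x]).head hpx') ∈ s₂ := by
    rw [hs₂, List.mem_toFinset, h2]
    exact List.mem_append_left _ (pe_head_mem y _ hpx')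
  have he₂3 : (y, (p' ++ [x]).head hpx') ∈ s₃ := by
    rw [hs₃def, List.mem_toFinset, h3]
    exact List.mem_append_right _ (pe_head_mem y _ hpx')
  have hs₁₃ : s₁ ≠ s₃ := fun hq => hdisj _ (hq ▸ he₂3) he₂2
  have hA₀ : A x ((p ++ [y]).head hpy) = true := (edge_facts hc1 he₀1).1
  exact hs₁₃ ((h x _ hA₀).unique ⟨hc1, he₀1⟩ ⟨hc3, he₀3⟩)

end Stmt8Aux


/-- a strongly connected digraph has each edge in exactly one directed
cycle iff any two distinct directed cycles share at most one vertex. -/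
theorem stmt_8 {n : ℕ} (A : Fin n → Fin n → Bool) (hA : ∀ i, A i i = false)
    (hsc : StronglyConnected A) :
    (∀ i j : Fin n, A i j = true →
        ∃! s : Finset (Fin n × Fin n), IsCycle A s ∧ (i, j) ∈ s) ↔
    (∀ s₁ s₂ : Finset (Fin n × Fin n), IsCycle A s₁ → IsCycle A s₂ → s₁ ≠ s₂ →
        (cycVerts s₁ ∩ cycVerts s₂).card ≤ 1) := by
  constructor
  · intro h s₁ s₂ hc1 hc2 hne
    exact Stmt8Aux.forward hA h hc1 hc2 hne
  · intro hsh i j hij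
    obtain ⟨s, hs⟩ := Stmt8Aux.exists_cycle hA hsc hij
    exact ⟨s, hs, fun s' hs' => Stmt8Aux.unique_of_share hA hsh hs' hs⟩
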